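/- Suppose for every state s and available action a, the KL divergence between the true next-state distribution P(·|s,a) and the next-state distribution P(·|s,â) induced by the surrogate action â (sampled via the composed maps φ̂ and φ) is at most δ²/2. Then for any two policies π* and π** whose induced state-transition kernels differ only through this action substitution, the value gap satisfies v^{π*}(s₀) − v^{π**}(s₀) ≤ γδ R_max/(1−γ)². -/

import Mathlib

open scoped BigOperators

/-- Distribution of the Markov chain at time `t` under kernel `P`. -/
def probAt {S : Type*} [Fintype S] (P : S → S → ℝ) (d0 : S → ℝ) : ℕ → S → ℝ
  | 0 => d0
  | (t + 1) => fun s => ∑ s', probAt P d0 t s' * P s' s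

/-- Discounted state distribution. -/
noncomputable def dDisc {S : Type*} [Fintype S] (γ : ℝ) (P : S → S → ℝ)
    (d0 : S → ℝ) (s : S) : ℝ :=
  (1 - γ) * ∑' t : ℕ, γ ^ t * probAt P d0 t s

/-- Expected discounted return. -/
noncomputable def val {S : Type*} [Fintype S] (γ : ℝ) (P : S → S → ℝ)
    (d0 : S → ℝ) (R : S → ℝ) : ℝ :=
  (1 - γ)⁻¹ * ∑ s, dDisc γ P d0 s * R s

/-- KL divergence between two mass functions on a finite set. -/
noncomputable def klDiv {S : Type*} [Fintype S] (p q : S → ℝ) : ℝ :=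
  ∑ s, p s * Real.log (p s / q s)

/-- Log-sum inequality. -/
lemma logSum {S : Type*} (T : Finset S) (p q : S → ℝ)
    (hp : ∀ s ∈ T, 0 < p s) (hq : ∀ s ∈ T, 0 < q s) :
    (∑ s ∈ T, p s) * Real.log ((∑ s ∈ T, p s) / (∑ s ∈ T, q s))
      ≤ ∑ s ∈ T, p s * Real.log (p s / q s) := by
  rcases T.eq_empty_or_nonempty with rfl | hT
  · simp
  · set P := ∑ s ∈ T, p s with hP
    set Q := ∑ s ∈ T, q s with hQ
    have hPpos : 0 < P := Finset.sum_pos hp hT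
    have hQpos : 0 < Q := Finset.sum_pos hq hT
    have key : ∀ s ∈ T, p s * Real.log (P / Q) + (p s - q s * (P / Q))
        ≤ p s * Real.log (p s / q s) := by
      intro s hs
      have hps := hp s hs
      have hqs := hq s hs
      have hx : 0 < q s * P / (p s * Q) := by positivity
      have hlog := Real.log_le_sub_one_of_pos hx
      have hsplit : Real.log (p s / q s)
          = Real.log (P / Q) - Real.log (q s * P / (p s * Q)) := by
        have hne1 : P / Q ≠ 0 := by positivity
        have hne2 : q s * P / (p s * Q) ≠ 0 := by positivity
        rw [← Real.log_div hne1 hne2]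
        congr 1
        field_simp
      rw [hsplit]
      have h2 : p s * (q s * P / (p s * Q)) = q s * (P / Q) := by
        field_simp
      nlinarith [mul_le_mul_of_nonneg_left hlog hps.le]
    have hsum : ∑ s ∈ T, (p s * Real.log (P / Q) + (p s - q s * (P / Q)))
        = P * Real.log (P / Q) := by
      rw [Finset.sum_add_distrib, ← Finset.sum_mul, Finset.sum_sub_distrib,
        ← Finset.sum_mul, ← hP, ← hQ]
      field_simp
      ring
    calc P * Real.log (P / Q)
        = ∑ s ∈ T, (p s * Real.log (P / Q) + (p s - q s * (P / Q))) := hsum.symm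
      _ ≤ ∑ s ∈ T, p s * Real.log (p s / q s) := Finset.sum_le_sum key

/-- Binary Pinsker inequality. -/
lemma binaryPinsker {a b : ℝ} (ha0 : 0 < a) (ha1 : a < 1) (hb0 : 0 < b) (hb1 : b < 1) :
    2 * (a - b) ^ 2 ≤ a * (Real.log a - Real.log b)
      + (1 - a) * (Real.log (1 - a) - Real.log (1 - b)) := by
  set F : ℝ → ℝ := fun x => a * (Real.log a - Real.log x)
      + (1 - a) * (Real.log (1 - a) - Real.log (1 - x)) - 2 * (a - x) ^ 2 with hF
  have hderiv : ∀ x ∈ Set.Ioo (0:ℝ) 1,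
      HasDerivAt F (((x - a) * (1 - 2*x)^2) / (x * (1 - x))) x := by
    intro x hx
    have hx0 : x ≠ 0 := ne_of_gt hx.1
    have hx1 : (1:ℝ) - x ≠ 0 := by have := hx.2; intro h; linarith
    have hx1' : (0:ℝ) < 1 - x := by have := hx.2; linarith
    have h1 : HasDerivAt (fun y : ℝ => Real.log y) x⁻¹ x := Real.hasDerivAt_log hx0
    have h2 : HasDerivAt (fun y : ℝ => (1:ℝ) - y) (-1) x := by
      simpa using (hasDerivAt_id x).const_sub (1:ℝ)
    have h3 : HasDerivAt (fun y : ℝ => Real.log (1 - y)) ((1 - x)⁻¹ * (-1)) x :=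
      (Real.hasDerivAt_log hx1).comp x h2
    have h4 : HasDerivAt (fun y : ℝ => a * (Real.log a - Real.log y)) (a * (0 - x⁻¹)) x :=
      ((hasDerivAt_const x (Real.log a)).sub h1).const_mul a
    have h5 : HasDerivAt (fun y : ℝ => (1 - a) * (Real.log (1 - a) - Real.log (1 - y)))
        ((1 - a) * (0 - (1 - x)⁻¹ * (-1))) x :=
      ((hasDerivAt_const x (Real.log (1 - a))).sub h3).const_mul (1 - a)
    have h6' : HasDerivAt (fun y : ℝ => (a - y)) (-1) x := by
      simpa using (hasDerivAt_id x).const_sub a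
    have h6 : HasDerivAt (fun y : ℝ => 2 * (a - y) ^ 2)
        (2 * ((2 : ℕ) * (a - x) ^ 1 * (-1))) x := (h6'.pow 2).const_mul 2
    have := (h4.add h5).sub h6
    refine this.congr_deriv ?_
    field_simp
    ring
  have hFa : F a = 0 := by simp [hF]
  have hdiffOn : ∀ x ∈ Set.Ioo (0:ℝ) 1, DifferentiableAt ℝ F x :=
    fun x hx => (hderiv x hx).differentiableAt
  have hconcl : ∀ c ∈ Set.Ioo (0:ℝ) 1, 0 ≤ F c := by
    intro c hc
    rcases le_total a c with hac | hca
    · have hsub : Set.Icc a c ⊆ Set.Ioo (0:ℝ) 1 := fun y hy =>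
        ⟨lt_of_lt_of_le ha0 hy.1, lt_of_le_of_lt hy.2 hc.2⟩
      have hmono : MonotoneOn F (Set.Icc a c) := by
        apply monotoneOn_of_deriv_nonneg (convex_Icc a c)
        · exact fun y hy => ((hdiffOn y (hsub hy)).continuousAt).continuousWithinAt
        · intro y hy
          rw [interior_Icc] at hy
          exact ((hdiffOn y (hsub (Set.Ioo_subset_Icc_self hy)))).differentiableWithinAt
        · intro y hy
          rw [interior_Icc] at hy
          have hy' := hsub (Set.Ioo_subset_Icc_self hy)
          rw [(hderiv y hy').deriv]
          apply div_nonneg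
          · exact mul_nonneg (by linarith [hy.1]) (sq_nonneg _)
          · exact le_of_lt (mul_pos hy'.1 (by linarith [hy'.2]))
      have := hmono (Set.left_mem_Icc.2 hac) (Set.right_mem_Icc.2 hac) hac
      linarith [hFa ▸ this]
    · have hsub : Set.Icc c a ⊆ Set.Ioo (0:ℝ) 1 := fun y hy =>
        ⟨lt_of_lt_of_le hc.1 hy.1, lt_of_le_of_lt hy.2 ha1⟩
      have hanti : AntitoneOn F (Set.Icc c a) := by
        apply antitoneOn_of_deriv_nonpos (convex_Icc c a)
        · exact fun y hy => ((hdiffOn y (hsub hy)).continuousAt).continuousWithinAt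
        · intro y hy
          rw [interior_Icc] at hy
          exact ((hdiffOn y (hsub (Set.Ioo_subset_Icc_self hy)))).differentiableWithinAt
        · intro y hy
          rw [interior_Icc] at hy
          have hy' := hsub (Set.Ioo_subset_Icc_self hy)
          rw [(hderiv y hy').deriv]
          apply div_nonpos_of_nonpos_of_nonneg
          · exact mul_nonpos_of_nonpos_of_nonneg (by linarith [hy.2]) (sq_nonneg _)
          · exact le_of_lt (mul_pos hy'.1 (by linarith [hy'.2]))
      have := hanti (Set.left_mem_Icc.2 hca) (Set.right_mem_Icc.2 hca) hca
      linarith [hFa ▸ this]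
    
  have := hconcl b ⟨hb0, hb1⟩
  simp only [hF] at this
  linarith

/-- Pinsker's inequality, squared form. -/
lemma pinsker_sq {S : Type*} [Fintype S] (p q : S → ℝ)
    (hp : ∀ s, 0 < p s) (hq : ∀ s, 0 < q s)
    (hps : ∑ s, p s = 1) (hqs : ∑ s, q s = 1) :
    (∑ s, |p s - q s|) ^ 2 ≤ 2 * klDiv p q := by
  classical
  set A : Finset S := Finset.univ.filter (fun s => q s ≤ p s) with hA
  set a := ∑ s ∈ A, p s with ha
  set b := ∑ s ∈ A, q s with hb
  have hcompl_p : ∑ s ∈ Aᶜ, p s = 1 - a := by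
    have := Finset.sum_add_sum_compl A p
    rw [hps] at this
    linarith
  have hcompl_q : ∑ s ∈ Aᶜ, q s = 1 - b := by
    have := Finset.sum_add_sum_compl A q
    rw [hqs] at this
    linarith
  -- L1 distance equals 2*(a-b)
  have hL1 : ∑ s, |p s - q s| = 2 * (a - b) := by
    rw [← Finset.sum_add_sum_compl A fun s => |p s - q s|]
    have e1 : ∑ s ∈ A, |p s - q s| = a - b := by
      rw [ha, hb, ← Finset.sum_sub_distrib]
      apply Finset.sum_congr rfl
      intro s hs
      have : q s ≤ p s := (Finset.mem_filter.1 hs).2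
      rw [abs_of_nonneg (by linarith)]
    have e2 : ∑ s ∈ Aᶜ, |p s - q s| = (1 - b) - (1 - a) := by
      rw [← hcompl_p, ← hcompl_q, ← Finset.sum_sub_distrib]
      apply Finset.sum_congr rfl
      intro s hs
      have hs' : ¬ (q s ≤ p s) := by
        intro h
        have := Finset.mem_compl.1 hs
        exact this (Finset.mem_filter.2 ⟨Finset.mem_univ s, h⟩)
      rw [abs_of_nonpos (by linarith [lt_of_not_ge hs'])]
      ring
    rw [e1, e2]; ring
  -- KL lower bound via log-sum
  have hKL1 : a * Real.log (a / b) ≤ ∑ s ∈ A, p s * Real.log (p s / q s) :=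
    logSum A p q (fun s _ => hp s) (fun s _ => hq s)
  have hKL2 : (1 - a) * Real.log ((1 - a) / (1 - b)) ≤ ∑ s ∈ Aᶜ, p s * Real.log (p s / q s) := by
    have := logSum Aᶜ p q (fun s _ => hp s) (fun s _ => hq s)
    rwa [hcompl_p, hcompl_q] at this
  have hKLsplit : klDiv p q = ∑ s ∈ A, p s * Real.log (p s / q s)
      + ∑ s ∈ Aᶜ, p s * Real.log (p s / q s) := by
    rw [klDiv, ← Finset.sum_add_sum_compl A fun s => p s * Real.log (p s / q s)]
  -- the two-point bound
  have hkey : 2 * (a - b) ^ 2 ≤ a * Real.log (a / b) + (1 - a) * Real.log ((1 - a) / (1 - b)) := by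
    rcases A.eq_empty_or_nonempty with hAe | hAne
    · have haz : a = 0 := by rw [ha, hAe]; simp
      have hbz : b = 0 := by rw [hb, hAe]; simp
      rw [haz, hbz]
      norm_num
    rcases Aᶜ.eq_empty_or_nonempty with hAce | hAcne
    · have ha1 : a = 1 := by
        have : (0:ℝ) = 1 - a := by rw [← hcompl_p, hAce]; simp
        linarith
      have hb1 : b = 1 := by
        have : (0:ℝ) = 1 - b := by rw [← hcompl_q, hAce]; simp
        linarith
      rw [ha1, hb1]
      norm_num
    · have ha0 : 0 < a := Finset.sum_pos (fun s _ => hp s) hAne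
      have hb0 : 0 < b := Finset.sum_pos (fun s _ => hq s) hAne
      have ha1 : a < 1 := by
        have : 0 < 1 - a := hcompl_p ▸ Finset.sum_pos (fun s _ => hp s) hAcne
        linarith
      have hb1 : b < 1 := by
        have : 0 < 1 - b := hcompl_q ▸ Finset.sum_pos (fun s _ => hq s) hAcne
        linarith
      have := binaryPinsker ha0 ha1 hb0 hb1
      rw [Real.log_div ha0.ne' hb0.ne', Real.log_div (by linarith : (1:ℝ) - a ≠ 0) (by linarith : (1:ℝ) - b ≠ 0)]
      exact this
  rw [hL1]
  nlinarith [hKL1, hKL2, hKLsplit, hkey]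

lemma probAt_nonneg {S : Type*} [Fintype S] {P : S → S → ℝ} {d0 : S → ℝ}
    (hP : ∀ s s', 0 ≤ P s s') (h0 : ∀ s, 0 ≤ d0 s) : ∀ t s, 0 ≤ probAt P d0 t s := by
  intro t
  induction t with
  | zero => exact h0
  | succ t ih =>
    intro s
    exact Finset.sum_nonneg fun s' _ => mul_nonneg (ih s') (hP s' s)

lemma probAt_sum {S : Type*} [Fintype S] {P : S → S → ℝ} {d0 : S → ℝ}
    (hP : ∀ s, ∑ s', P s s' = 1) (h0 : ∑ s, d0 s = 1) :
    ∀ t, ∑ s, probAt P d0 t s = 1 := by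
  intro t
  induction t with
  | zero => exact h0
  | succ t ih =>
    show ∑ s, ∑ s', probAt P d0 t s' * P s' s = 1
    rw [Finset.sum_comm]
    calc ∑ s', ∑ s, probAt P d0 t s' * P s' s
        = ∑ s', probAt P d0 t s' * ∑ s, P s' s := by
          simp [Finset.mul_sum]
      _ = 1 := by simp [hP, ih]

lemma probAt_le_one {S : Type*} [Fintype S] {P : S → S → ℝ} {d0 : S → ℝ}
    (hPn : ∀ s s', 0 ≤ P s s') (hP : ∀ s, ∑ s', P s s' = 1)
    (h0n : ∀ s, 0 ≤ d0 s) (h0 : ∑ s, d0 s = 1) (t : ℕ) (s : S) :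
    probAt P d0 t s ≤ 1 := by
  have := Finset.single_le_sum (f := fun s => probAt P d0 t s)
    (fun s' _ => probAt_nonneg hPn h0n t s') (Finset.mem_univ s)
  rw [probAt_sum hP h0 t] at this
  exact this

lemma l1_bound {S : Type*} [Fintype S] {P1 P2 : S → S → ℝ} {d0 : S → ℝ} {δ : ℝ}
    (h1n : ∀ s s', 0 ≤ P1 s s') (h1s : ∀ s, ∑ s', P1 s s' = 1)
    (h2n : ∀ s s', 0 ≤ P2 s s') (h2s : ∀ s, ∑ s', P2 s s' = 1)
    (hrow : ∀ s, ∑ s', |P1 s s' - P2 s s'| ≤ δ)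
    (h0n : ∀ s, 0 ≤ d0 s) (h0s : ∑ s, d0 s = 1) :
    ∀ t, ∑ s, |probAt P1 d0 t s - probAt P2 d0 t s| ≤ t * δ := by
  intro t
  induction t with
  | zero => simp [probAt]
  | succ t ih =>
    have hp2n := probAt_nonneg h2n h0n t
    have hp2s := probAt_sum h2s h0s t
    set f := probAt P1 d0 t with hf
    set g := probAt P2 d0 t with hg
    have step1 : ∑ s, |probAt P1 d0 (t+1) s - probAt P2 d0 (t+1) s|
        ≤ ∑ s, ∑ s', |f s' * P1 s' s - g s' * P2 s' s| := by
      apply Finset.sum_le_sum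
      intro s _
      show |(∑ s', f s' * P1 s' s) - ∑ s', g s' * P2 s' s| ≤ _
      rw [← Finset.sum_sub_distrib]
      exact Finset.abs_sum_le_sum_abs _ _
    have step2 : ∀ s' s, |f s' * P1 s' s - g s' * P2 s' s|
        ≤ |f s' - g s'| * P1 s' s + g s' * |P1 s' s - P2 s' s| := by
      intro s' s
      have : f s' * P1 s' s - g s' * P2 s' s
          = (f s' - g s') * P1 s' s + g s' * (P1 s' s - P2 s' s) := by ring
      rw [this]
      calc |(f s' - g s') * P1 s' s + g s' * (P1 s' s - P2 s' s)|
          ≤ |(f s' - g s') * P1 s' s| + |g s' * (P1 s' s - P2 s' s)| := abs_add_le _ _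
        _ = |f s' - g s'| * P1 s' s + g s' * |P1 s' s - P2 s' s| := by
            rw [abs_mul, abs_mul, abs_of_nonneg (h1n s' s), abs_of_nonneg (hp2n s')]
    calc ∑ s, |probAt P1 d0 (t+1) s - probAt P2 d0 (t+1) s|
        ≤ ∑ s, ∑ s', |f s' * P1 s' s - g s' * P2 s' s| := step1
      _ = ∑ s', ∑ s, |f s' * P1 s' s - g s' * P2 s' s| := Finset.sum_comm
      _ ≤ ∑ s', ∑ s, (|f s' - g s'| * P1 s' s + g s' * |P1 s' s - P2 s' s|) :=
          Finset.sum_le_sum fun s' _ => Finset.sum_le_sum fun s _ => step2 s' s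
      _ = ∑ s', (|f s' - g s'| * (∑ s, P1 s' s) + g s' * ∑ s, |P1 s' s - P2 s' s|) := by
          simp [Finset.sum_add_distrib, Finset.mul_sum]
      _ ≤ ∑ s', (|f s' - g s'| * 1 + g s' * δ) := by
          apply Finset.sum_le_sum
          intro s' _
          have h1 : |f s' - g s'| * (∑ s, P1 s' s) = |f s' - g s'| * 1 := by rw [h1s]
          have h2 : g s' * (∑ s, |P1 s' s - P2 s' s|) ≤ g s' * δ :=
            mul_le_mul_of_nonneg_left (hrow s') (hp2n s')
          linarith
      _ = (∑ s', |f s' - g s'|) + δ := by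
          simp only [mul_one]
          rw [Finset.sum_add_distrib, ← Finset.sum_mul, hp2s, one_mul]
      _ ≤ t * δ + δ := by
          have hδ0 : 0 ≤ δ := le_trans (Finset.sum_nonneg fun s _ => abs_nonneg _)
            (hrow (Classical.choice (by
              by_contra h
              have : Finset.univ (α := S) = ∅ := by
                rw [Finset.univ_eq_empty_iff]
                exact ⟨fun s => absurd ⟨s⟩ h⟩
              rw [this] at h0s
              simp at h0s)))
          linarith
      _ = (t + 1 : ℕ) * δ := by push_cast; ring

lemma val_eq {S : Type*} [Fintype S] {γ : ℝ} (hγ0 : 0 ≤ γ) (hγ1 : γ < 1)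
    {P : S → S → ℝ} {d0 R : S → ℝ}
    (hPn : ∀ s s', 0 ≤ P s s') (hPs : ∀ s, ∑ s', P s s' = 1)
    (h0n : ∀ s, 0 ≤ d0 s) (h0s : ∑ s, d0 s = 1) :
    val γ P d0 R = ∑' t : ℕ, γ ^ t * ∑ s, probAt P d0 t s * R s := by
  have hgeom : Summable fun t : ℕ => γ ^ t := summable_geometric_of_lt_one hγ0 hγ1
  have hsummand : ∀ s : S, Summable fun t : ℕ => γ ^ t * probAt P d0 t s * R s := by
    intro s
    apply Summable.of_norm_bounded (hgeom.mul_right |R s|)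
    intro t
    rw [norm_mul, norm_mul]
    simp only [Real.norm_eq_abs]
    rw [abs_of_nonneg (pow_nonneg hγ0 t), abs_of_nonneg (probAt_nonneg hPn h0n t s)]
    have h1 : probAt P d0 t s ≤ 1 := probAt_le_one hPn hPs h0n h0s t s
    have := probAt_nonneg hPn h0n t s
    have h2 : γ ^ t * probAt P d0 t s ≤ γ ^ t * 1 :=
      mul_le_mul_of_nonneg_left h1 (pow_nonneg hγ0 t)
    have := mul_le_mul_of_nonneg_right h2 (abs_nonneg (R s))
    linarith
  have h1γ : (1 : ℝ) - γ ≠ 0 := by linarith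
  unfold val dDisc
  have e1 : ∑ s, ((1 - γ) * ∑' t : ℕ, γ ^ t * probAt P d0 t s) * R s
      = (1 - γ) * ∑ s, (∑' t : ℕ, γ ^ t * probAt P d0 t s) * R s := by
    rw [Finset.mul_sum]
    apply Finset.sum_congr rfl
    intro s _
    ring
  rw [e1, inv_mul_cancel_left₀ h1γ]
  have e2 : ∀ s : S, (∑' t : ℕ, γ ^ t * probAt P d0 t s) * R s
      = ∑' t : ℕ, γ ^ t * probAt P d0 t s * R s := fun s => (tsum_mul_right).symm
  calc ∑ s, (∑' t : ℕ, γ ^ t * probAt P d0 t s) * R s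
      = ∑ s, ∑' t : ℕ, γ ^ t * probAt P d0 t s * R s := Finset.sum_congr rfl fun s _ => e2 s
    _ = ∑' t : ℕ, ∑ s, γ ^ t * probAt P d0 t s * R s :=
        (Summable.tsum_finsetSum fun s _ => hsummand s).symm
    _ = ∑' t : ℕ, γ ^ t * ∑ s, probAt P d0 t s * R s := by
        apply tsum_congr
        intro t
        rw [Finset.mul_sum]
        apply Finset.sum_congr rfl
        intro s _
        ring

/-- if for every state `s` and available action `a` the KL
divergence between the true next-state distribution `P(·|s,a)` and the
next-state distribution `P(·|s,â)` under the substituted action `â = σ s a`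
is at most `δ²/2`, then for two policies `π*` and `π**` whose induced kernels
differ only via this action substitution,
`v^{π*}(s₀) - v^{π**}(s₀) ≤ γ δ Rmax / (1-γ)²`. -/
theorem stmt8 {S A : Type*} [Fintype S]
    (γ δ Rmax : ℝ) (hγ0 : 0 ≤ γ) (hγ1 : γ < 1) (hδ : 0 ≤ δ)
    (Pt : S → A → S → ℝ)
    (hPtpos : ∀ s a s', 0 < Pt s a s')
    (hPtsum : ∀ s a, ∑ s', Pt s a s' = 1)
    (R : S → ℝ) (hR : ∀ s, |R s| ≤ Rmax)
    (d0 : S → ℝ) (hd0nonneg : ∀ s, 0 ≤ d0 s) (hd0sum : ∑ s, d0 s = 1)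
    (σ : S → A → A)
    (hKL : ∀ s a, klDiv (Pt s a) (Pt s (σ s a)) ≤ δ ^ 2 / 2)
    (π₁ π₂ : S → A) (hsub : ∀ s, π₂ s = σ s (π₁ s)) :
    val γ (fun s s' => Pt s (π₁ s) s') d0 R
        - val γ (fun s s' => Pt s (π₂ s) s') d0 R
      ≤ γ * δ * Rmax / (1 - γ) ^ 2 := by
  have hS : Nonempty S := by
    by_contra h
    have : Finset.univ (α := S) = ∅ := by
      rw [Finset.univ_eq_empty_iff]
      exact ⟨fun s => absurd ⟨s⟩ h⟩
    rw [this] at hd0sum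
    simp at hd0sum
  obtain ⟨s₀⟩ := hS
  have hRmax : 0 ≤ Rmax := le_trans (abs_nonneg (R s₀)) (hR s₀)
  set P1 : S → S → ℝ := fun s s' => Pt s (π₁ s) s' with hP1
  set P2 : S → S → ℝ := fun s s' => Pt s (π₂ s) s' with hP2
  have h1n : ∀ s s', 0 ≤ P1 s s' := fun s s' => (hPtpos s (π₁ s) s').le
  have h2n : ∀ s s', 0 ≤ P2 s s' := fun s s' => (hPtpos s (π₂ s) s').le
  have h1s : ∀ s, ∑ s', P1 s s' = 1 := fun s => hPtsum s (π₁ s)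
  have h2s : ∀ s, ∑ s', P2 s s' = 1 := fun s => hPtsum s (π₂ s)
  -- row-wise L1 bound via Pinsker
  have hrow : ∀ s, ∑ s', |P1 s s' - P2 s s'| ≤ δ := by
    intro s
    have hsq := pinsker_sq (Pt s (π₁ s)) (Pt s (π₂ s))
      (fun s' => hPtpos s (π₁ s) s') (fun s' => hPtpos s (π₂ s) s')
      (hPtsum s (π₁ s)) (hPtsum s (π₂ s))
    have hKL' : klDiv (Pt s (π₁ s)) (Pt s (π₂ s)) ≤ δ ^ 2 / 2 := by
      rw [hsub s]; exact hKL s (π₁ s)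
    have hnn : 0 ≤ ∑ s', |P1 s s' - P2 s s'| :=
      Finset.sum_nonneg fun s' _ => abs_nonneg _
    nlinarith [hsq, hKL', hnn]
  -- expected rewards
  set E1 : ℕ → ℝ := fun t => ∑ s, probAt P1 d0 t s * R s with hE1
  set E2 : ℕ → ℝ := fun t => ∑ s, probAt P2 d0 t s * R s with hE2
  have hEbound : ∀ (P : S → S → ℝ), (∀ s s', 0 ≤ P s s') → (∀ s, ∑ s', P s s' = 1) →
      ∀ t, |∑ s, probAt P d0 t s * R s| ≤ Rmax := by
    intro P hPn hPs t
    calc |∑ s, probAt P d0 t s * R s| ≤ ∑ s, |probAt P d0 t s * R s| :=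
          Finset.abs_sum_le_sum_abs _ _
      _ ≤ ∑ s, probAt P d0 t s * Rmax := by
          apply Finset.sum_le_sum
          intro s _
          rw [abs_mul, abs_of_nonneg (probAt_nonneg hPn hd0nonneg t s)]
          exact mul_le_mul_of_nonneg_left (hR s) (probAt_nonneg hPn hd0nonneg t s)
      _ = Rmax := by rw [← Finset.sum_mul, probAt_sum hPs hd0sum t, one_mul]
  have hgeom : Summable fun t : ℕ => γ ^ t := summable_geometric_of_lt_one hγ0 hγ1
  have hsumE : ∀ (E : ℕ → ℝ), (∀ t, |E t| ≤ Rmax) → Summable fun t => γ ^ t * E t := by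
    intro E hE
    apply Summable.of_norm_bounded (hgeom.mul_right Rmax)
    intro t
    rw [norm_mul, Real.norm_eq_abs, Real.norm_eq_abs, abs_of_nonneg (pow_nonneg hγ0 t)]
    exact mul_le_mul_of_nonneg_left (hE t) (pow_nonneg hγ0 t)
  have hs1 : Summable fun t => γ ^ t * E1 t := hsumE E1 (hEbound P1 h1n h1s)
  have hs2 : Summable fun t => γ ^ t * E2 t := hsumE E2 (hEbound P2 h2n h2s)
  have hnorm : ‖γ‖ < 1 := by rwa [Real.norm_eq_abs, abs_of_nonneg hγ0]
  have hsRHS : Summable fun t : ℕ => δ * Rmax * ((t : ℝ) * γ ^ t) := by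
    apply Summable.mul_left
    have := summable_pow_mul_geometric_of_norm_lt_one (R := ℝ) 1 hnorm
    apply this.congr
    intro t
    simp
  -- rewrite values
  rw [val_eq hγ0 hγ1 h1n h1s hd0nonneg hd0sum, val_eq hγ0 hγ1 h2n h2s hd0nonneg hd0sum]
  have hdiff : (∑' t : ℕ, γ ^ t * E1 t) - (∑' t : ℕ, γ ^ t * E2 t)
      = ∑' t : ℕ, (γ ^ t * E1 t - γ ^ t * E2 t) := (Summable.tsum_sub hs1 hs2).symm
  rw [hdiff]
  have hterm : ∀ t : ℕ, γ ^ t * E1 t - γ ^ t * E2 t ≤ δ * Rmax * ((t : ℝ) * γ ^ t) := by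
    intro t
    have hl1 := l1_bound h1n h1s h2n h2s hrow hd0nonneg hd0sum t
    have hdE : E1 t - E2 t ≤ (t : ℝ) * δ * Rmax := by
      have : E1 t - E2 t = ∑ s, (probAt P1 d0 t s - probAt P2 d0 t s) * R s := by
        rw [hE1, hE2, ← Finset.sum_sub_distrib]
        apply Finset.sum_congr rfl
        intro s _
        ring
      rw [this]
      calc ∑ s, (probAt P1 d0 t s - probAt P2 d0 t s) * R s
          ≤ ∑ s, |probAt P1 d0 t s - probAt P2 d0 t s| * Rmax := by
            apply Finset.sum_le_sum
            intro s _
            calc (probAt P1 d0 t s - probAt P2 d0 t s) * R s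
                ≤ |(probAt P1 d0 t s - probAt P2 d0 t s) * R s| := le_abs_self _
              _ = |probAt P1 d0 t s - probAt P2 d0 t s| * |R s| := abs_mul _ _
              _ ≤ |probAt P1 d0 t s - probAt P2 d0 t s| * Rmax :=
                  mul_le_mul_of_nonneg_left (hR s) (abs_nonneg _)
        _ = (∑ s, |probAt P1 d0 t s - probAt P2 d0 t s|) * Rmax := by
            rw [Finset.sum_mul]
        _ ≤ (t : ℝ) * δ * Rmax := mul_le_mul_of_nonneg_right hl1 hRmax
    have hγt : (0:ℝ) ≤ γ ^ t := pow_nonneg hγ0 t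
    calc γ ^ t * E1 t - γ ^ t * E2 t = γ ^ t * (E1 t - E2 t) := by ring
      _ ≤ γ ^ t * ((t : ℝ) * δ * Rmax) := mul_le_mul_of_nonneg_left hdE hγt
      _ = δ * Rmax * ((t : ℝ) * γ ^ t) := by ring
  calc ∑' t : ℕ, (γ ^ t * E1 t - γ ^ t * E2 t)
      ≤ ∑' t : ℕ, δ * Rmax * ((t : ℝ) * γ ^ t) :=
        Summable.tsum_le_tsum hterm (hs1.sub hs2) hsRHS
    _ = δ * Rmax * ∑' t : ℕ, (t : ℝ) * γ ^ t := by
        rw [tsum_mul_left]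
    _ = δ * Rmax * (γ / (1 - γ) ^ 2) := by
        rw [tsum_coe_mul_geometric_of_norm_lt_one hnorm]
    _ = γ * δ * Rmax / (1 - γ) ^ 2 := by ring
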